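/- For any integer m and nonnegative integer k, the sum over i from 0 to k of C(m-i, i) * C(i-m+k, k-i) equals 1 if k is even and 0 if k is odd. -/

import Mathlib

/-- The generalized binomial coefficient `C(a, b) = a(a-1)⋯(a-b+1)/b!`
for an integer `a` and a natural number `b`, valued in `ℚ`. -/
noncomputable def genChoose (a : ℤ) (b : ℕ) : ℚ :=
  (∏ i ∈ Finset.range b, ((a : ℚ) - i)) / (Nat.factorial b : ℚ)

lemma genChoose_zero (a : ℤ) : genChoose a 0 = 1 := by simp [genChoose]

lemma pascal' (a : ℤ) (b : ℕ) :
    genChoose (a + 1) (b + 1) = genChoose a (b + 1) + genChoose a b := by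
  unfold genChoose
  have h1 : ∏ i ∈ Finset.range (b + 1), (((a + 1 : ℤ) : ℚ) - i)
      = ((a : ℚ) + 1) * ∏ i ∈ Finset.range b, ((a : ℚ) - i) := by
    rw [Finset.prod_range_succ']
    push_cast
    rw [mul_comm]
    congr 1
    · ring
    · exact Finset.prod_congr rfl fun i _ => by ring
  have h2 : ∏ i ∈ Finset.range (b + 1), ((a : ℚ) - i)
      = (∏ i ∈ Finset.range b, ((a : ℚ) - i)) * ((a : ℚ) - b) := by
    rw [Finset.prod_range_succ]
  rw [h1, h2]
  have hb : (Nat.factorial (b + 1) : ℚ) = (b + 1) * Nat.factorial b := by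
    push_cast [Nat.factorial_succ]; ring
  rw [hb]
  have hbne : (Nat.factorial b : ℚ) ≠ 0 := by
    exact_mod_cast Nat.factorial_ne_zero b
  have hb1 : ((b : ℚ) + 1) ≠ 0 := by positivity
  field_simp
  ring

lemma genChoose_natCast (n b : ℕ) : genChoose (n : ℤ) b = (n.choose b : ℚ) := by
  have hprod : ∀ b : ℕ, (∏ i ∈ Finset.range b, ((n : ℚ) - i)) = (n.descFactorial b : ℚ) := by
    intro b
    induction b with
    | zero => simp
    | succ c ih =>
      rw [Finset.prod_range_succ, ih, Nat.descFactorial_succ]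
      rcases le_or_gt c n with h | h
      · push_cast [Nat.cast_sub h]; ring
      · have : n.descFactorial c = 0 := (Nat.descFactorial_eq_zero_iff_lt).mpr h
        simp [this]
  unfold genChoose
  rw [show ((n : ℤ) : ℚ) = (n : ℚ) by push_cast; ring, hprod,
    Nat.descFactorial_eq_factorial_mul_choose]
  push_cast
  rw [mul_comm]
  field_simp

noncomputable def Ssum (k : ℕ) (m : ℤ) : ℚ :=
  ∑ i ∈ Finset.range (k + 1), genChoose (m - i) i * genChoose ((i : ℤ) - m + k) (k - i)

noncomputable def Vsum (k : ℕ) (m : ℤ) : ℚ :=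
  ∑ i ∈ Finset.range (k + 1), genChoose (m - i) i * genChoose ((i : ℤ) - m + k - 1) (k - i)

lemma lemA (k : ℕ) (m : ℤ) : Ssum (k + 1) m = Vsum (k + 1) m + Ssum k m := by
  unfold Ssum Vsum
  rw [Finset.sum_range_succ (n := k + 1), Finset.sum_range_succ (n := k + 1)]
  have hterm : ∀ i ∈ Finset.range (k + 1),
      genChoose (m - i) i * genChoose ((i : ℤ) - m + (k + 1 : ℕ)) ((k + 1) - i)
      = genChoose (m - i) i * genChoose ((i : ℤ) - m + (k + 1 : ℕ) - 1) ((k + 1) - i)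
        + genChoose (m - i) i * genChoose ((i : ℤ) - m + k) (k - i) := by
    intro i hi
    have hik : i ≤ k := by simpa [Nat.lt_succ_iff] using hi
    have hsub : k + 1 - i = (k - i) + 1 := by omega
    have e1 : (i : ℤ) - m + ((k : ℤ) + 1) = ((i : ℤ) - m + k) + 1 := by ring
    have e2 : (i : ℤ) - m + (k : ℤ) + 1 - 1 = (i : ℤ) - m + k := by ring
    push_cast
    rw [hsub, e1, e2, pascal', mul_add]
  rw [Finset.sum_congr rfl hterm, Finset.sum_add_distrib]
  have hlast : genChoose (m - (k + 1 : ℕ)) (k + 1)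
        * genChoose (((k + 1 : ℕ) : ℤ) - m + (k + 1 : ℕ)) ((k + 1) - (k + 1))
      = genChoose (m - (k + 1 : ℕ)) (k + 1)
        * genChoose (((k + 1 : ℕ) : ℤ) - m + (k + 1 : ℕ) - 1) ((k + 1) - (k + 1)) := by
    simp [genChoose_zero]
  rw [hlast]
  ring

lemma lemB (k : ℕ) (m : ℤ) : Ssum (k + 1) m = Vsum (k + 1) (m - 1) + Ssum k (m - 2) := by
  unfold Ssum Vsum
  rw [Finset.sum_range_succ' _ (k + 1), Finset.sum_range_succ' _ (k + 1)]
  have hterm : ∀ i ∈ Finset.range (k + 1),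
      genChoose (m - (i + 1 : ℕ)) (i + 1)
          * genChoose (((i + 1 : ℕ) : ℤ) - m + (k + 1 : ℕ)) ((k + 1) - (i + 1))
      = genChoose ((m - 1) - (i + 1 : ℕ)) (i + 1)
          * genChoose (((i + 1 : ℕ) : ℤ) - (m - 1) + (k + 1 : ℕ) - 1) ((k + 1) - (i + 1))
        + genChoose ((m - 2) - i) i * genChoose ((i : ℤ) - (m - 2) + k) (k - i) := by
    intro i hi
    have hsub : k + 1 - (i + 1) = k - i := by omega
    have e1 : m - ((i : ℤ) + 1) = (m - (i : ℤ) - 2) + 1 := by ring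
    have e2 : m - 1 - ((i : ℤ) + 1) = m - (i : ℤ) - 2 := by ring
    have e3 : (i : ℤ) + 1 - m + ((k : ℤ) + 1) = (i : ℤ) - (m - 2) + k := by ring
    have e4 : (i : ℤ) + 1 - (m - 1) + ((k : ℤ) + 1) - 1 = (i : ℤ) - (m - 2) + k := by ring
    have e5 : m - 2 - (i : ℤ) = m - (i : ℤ) - 2 := by ring
    push_cast
    rw [e1, e2, e3, e4, e5, pascal', add_mul]
  rw [Finset.sum_congr rfl hterm, Finset.sum_add_distrib]
  have hfirst : genChoose (m - (0 : ℕ)) 0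
        * genChoose (((0 : ℕ) : ℤ) - m + (k + 1 : ℕ)) ((k + 1) - 0)
      = genChoose ((m - 1) - (0 : ℕ)) 0
        * genChoose (((0 : ℕ) : ℤ) - (m - 1) + (k + 1 : ℕ) - 1) ((k + 1) - 0) := by
    rw [genChoose_zero, genChoose_zero]
    congr 1
    push_cast
    ring
  rw [hfirst]
  ring

lemma const_of_step (f : ℤ → ℚ) (h : ∀ m, f m = f (m + 1)) (m m' : ℤ) : f m = f m' := by
  have key : ∀ n : ℤ, f n = f 0 := by
    intro n
    induction n using Int.induction_on with
    | zero => rfl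
    | succ n ih => exact (h n).symm.trans ih
    | pred n ih =>
      have h2 := h (-(n : ℤ) - 1)
      rw [sub_add_cancel] at h2
      exact h2.trans ih
  rw [key m, key m']

lemma Sconst (k : ℕ) : ∀ m m' : ℤ, Ssum k m = Ssum k m' := by
  induction k with
  | zero =>
    intro m m'
    simp [Ssum, genChoose_zero]
  | succ k ih =>
    have hV : ∀ m : ℤ, Vsum (k + 1) m = Vsum (k + 1) (m + 1) := by
      intro m
      have hA := lemA k (m + 1)
      have hB := lemB k (m + 1)
      have h1 : Vsum (k + 1) (m + 1 - 1) = Vsum (k + 1) m := by norm_num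
      rw [h1] at hB
      have h2 : Ssum k (m + 1 - 2) = Ssum k (m + 1) := ih _ _
      rw [h2] at hB
      have := hA.symm.trans hB
      linarith
    intro m m'
    rw [lemA k m, lemA k m', ih m m',
      const_of_step (Vsum (k + 1)) hV m m']

lemma choose_diag_sum (k : ℕ) :
    (∑ i ∈ Finset.range (k + 1), ((k - i).choose i * i.choose (k - i)) : ℕ)
      = if Even k then 1 else 0 := by
  rcases Nat.even_or_odd k with he | ho
  · obtain ⟨j, hj⟩ := he
    subst hj
    rw [if_pos ⟨j, rfl⟩]
    rw [Finset.sum_eq_single_of_mem j (by simp [Finset.mem_range])]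
    · have : j + j - j = j := by omega
      simp [this]
    · intro i hi hne
      rcases lt_or_gt_of_ne hne with h | h
      · have : i < j + j - i := by omega
        rw [Nat.choose_eq_zero_of_lt this, mul_zero]
      · have : j + j - i < i := by
          have : i ≤ j + j := by simpa [Finset.mem_range, Nat.lt_succ_iff] using hi
          omega
        rw [Nat.choose_eq_zero_of_lt this, zero_mul]
  · obtain ⟨j, hj⟩ := ho
    subst hj
    rw [if_neg (by intro he; obtain ⟨r, hr⟩ := he; omega)]
    apply Finset.sum_eq_zero
    intro i hi
    have hik : i ≤ 2 * j + 1 := by simpa [Finset.mem_range, Nat.lt_succ_iff] using hi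
    rcases lt_or_ge i (2 * j + 1 - i) with h | h
    · rw [Nat.choose_eq_zero_of_lt h, mul_zero]
    · have h2 : 2 * j + 1 - i < i := by omega
      rw [Nat.choose_eq_zero_of_lt h2, zero_mul]

lemma Skk (k : ℕ) : Ssum k k = if Even k then 1 else 0 := by
  unfold Ssum
  have hterm : ∀ i ∈ Finset.range (k + 1),
      genChoose ((k : ℤ) - i) i * genChoose ((i : ℤ) - k + k) (k - i)
      = (((k - i).choose i * i.choose (k - i) : ℕ) : ℚ) := by
    intro i hi
    have hik : i ≤ k := by simpa [Nat.lt_succ_iff] using hi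
    have e1 : (k : ℤ) - i = ((k - i : ℕ) : ℤ) := by
      push_cast [Nat.cast_sub hik]; ring
    have e2 : (i : ℤ) - k + k = ((i : ℕ) : ℤ) := by ring
    rw [e1, e2, genChoose_natCast, genChoose_natCast]
    push_cast
    ring
  rw [Finset.sum_congr rfl hterm, ← Nat.cast_sum, choose_diag_sum]
  split <;> simp

theorem stmt1 (m : ℤ) (k : ℕ) :
    ∑ i ∈ Finset.range (k + 1),
        genChoose (m - i) i * genChoose ((i : ℤ) - m + k) (k - i) =
      if Even k then 1 else 0 := by
  have : Ssum k m = if Even k then 1 else 0 := by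
    rw [Sconst k m k, Skk]
  simpa [Ssum] using this
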